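/- Let K be a C-pseudo-cone in ℝⁿ that is smooth and strictly convex inside int C. Then the support function h_{K*} of the copolar set K* is differentiable at every point of int C. -/

import Mathlib

open Set Pointwise RealInnerProductSpace

noncomputable section

/-- The support function of a set `K ⊆ ℝⁿ`, with values in `ℝ ∪ {∞} ⊆ EReal`. -/
def supportFn {n : ℕ} (K : Set (EuclideanSpace ℝ (Fin n))) (u : EuclideanSpace ℝ (Fin n)) :
    EReal :=
  sSup ((fun x => ((⟪u, x⟫ : ℝ) : EReal)) '' K)

/-- The copolar set `K* = {u : ⟨u,x⟩ ≤ -1 for all x ∈ K}`. -/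
def copolar {n : ℕ} (K : Set (EuclideanSpace ℝ (Fin n))) : Set (EuclideanSpace ℝ (Fin n)) :=
  {u | ∀ x ∈ K, ⟪u, x⟫ ≤ (-1 : ℝ)}

/-- The dual cone `C° = {u : ⟨u,x⟩ ≤ 0 for all x ∈ C}`. -/
def dualCone {n : ℕ} (C : Set (EuclideanSpace ℝ (Fin n))) : Set (EuclideanSpace ℝ (Fin n)) :=
  {u | ∀ x ∈ C, ⟪u, x⟫ ≤ (0 : ℝ)}

/-- The recession cone of `K`. -/
def recessionCone {n : ℕ} (K : Set (EuclideanSpace ℝ (Fin n))) :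
    Set (EuclideanSpace ℝ (Fin n)) :=
  {y | ∀ x ∈ K, ∀ t : ℝ, 0 ≤ t → x + t • y ∈ K}

/-- A pseudo-cone: a nonempty closed convex set with `0 ∉ K` and `λK ⊆ K` for `λ ≥ 1`. -/
def IsPseudoCone {n : ℕ} (K : Set (EuclideanSpace ℝ (Fin n))) : Prop :=
  K.Nonempty ∧ IsClosed K ∧ Convex ℝ K ∧ (0 : EuclideanSpace ℝ (Fin n)) ∉ K ∧
    ∀ lam : ℝ, 1 ≤ lam → lam • K ⊆ K

/-- A pointed closed convex cone with nonempty interior. -/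
def IsPointedSolidClosedCone {n : ℕ} (C : Set (EuclideanSpace ℝ (Fin n))) : Prop :=
  IsClosed C ∧ Convex ℝ C ∧ (∀ lam : ℝ, 0 ≤ lam → lam • C ⊆ C) ∧
    (interior C).Nonempty ∧ C ∩ (-C) = {0}

/-- A `C`-pseudo-cone: a pseudo-cone whose recession cone is `C`, where `C` is a
pointed closed convex cone with nonempty interior. -/
def IsCPseudoCone {n : ℕ} (C K : Set (EuclideanSpace ℝ (Fin n))) : Prop :=
  IsPointedSolidClosedCone C ∧ IsPseudoCone K ∧ recessionCone K = C

/-- `H` is a supporting hyperplane of `K`: `H = {y : ⟨u,y⟩ = c}` for some `u ≠ 0`, with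
`K` on the side `⟨u,·⟩ ≤ c` and `H` touching `K`. -/
def IsSuppHyperplane {n : ℕ} (K H : Set (EuclideanSpace ℝ (Fin n))) : Prop :=
  ∃ (u : EuclideanSpace ℝ (Fin n)) (c : ℝ), u ≠ 0 ∧ H = {y | ⟪u, y⟫ = c} ∧
    (∀ y ∈ K, ⟪u, y⟫ ≤ c) ∧ ∃ y ∈ K, ⟪u, y⟫ = c

/-- `K` is smooth inside `int C`: each boundary point of `K` lying in `int C` is contained
in a unique supporting hyperplane of `K`. -/
def SmoothInside {n : ℕ} (K C : Set (EuclideanSpace ℝ (Fin n))) : Prop :=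
  ∀ x ∈ frontier K ∩ interior C,
    ∃! H : Set (EuclideanSpace ℝ (Fin n)), IsSuppHyperplane K H ∧ x ∈ H

/-- `K` is strictly convex inside `int C`: each boundary point of `K` lying in `int C`
admits a supporting hyperplane meeting `K` only in that point. -/
def StrictlyConvexInside {n : ℕ} (K C : Set (EuclideanSpace ℝ (Fin n))) : Prop :=
  ∀ x ∈ frontier K ∩ interior C,
    ∃ H : Set (EuclideanSpace ℝ (Fin n)), IsSuppHyperplane K H ∧ H ∩ K = {x}

/-- `(x, xs)` is a crucial pair of `K`: `x ∈ ∂K`, `xs` is an outer normal vector of `K`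
at `x`, and `⟨x, xs⟩ = -1`. -/
def IsCrucialPair {n : ℕ} (K : Set (EuclideanSpace ℝ (Fin n)))
    (x xs : EuclideanSpace ℝ (Fin n)) : Prop :=
  x ∈ frontier K ∧ (∀ y ∈ K, ⟪xs, y - x⟫ ≤ (0 : ℝ)) ∧ ⟪x, xs⟫ = (-1 : ℝ)


section Aux

variable {n : ℕ}

private lemma isClosed_copolar' (K : Set (EuclideanSpace ℝ (Fin n))) :
    IsClosed (copolar K) := by
  have h : copolar K = ⋂ x ∈ K, {u : EuclideanSpace ℝ (Fin n) | ⟪u, x⟫ ≤ (-1:ℝ)} := by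
    ext u; simp [copolar]
  rw [h]
  exact isClosed_biInter fun x _ =>
    isClosed_le (Continuous.inner continuous_id continuous_const) continuous_const

private lemma le_zero_of_sep (K : Set (EuclideanSpace ℝ (Fin n)))
    (hscale : ∀ lam : ℝ, 1 ≤ lam → lam • K ⊆ K)
    (f : EuclideanSpace ℝ (Fin n) →L[ℝ] ℝ) (c : ℝ) (hf : ∀ a ∈ K, f a < c) :
    ∀ a ∈ K, f a ≤ 0 := by
  intro a ha
  by_contra hpos
  push_neg at hpos
  have h1 : (1:ℝ) ≤ max 1 ((c+1)/(f a)) := le_max_left _ _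
  have hmem : (max 1 ((c+1)/(f a))) • a ∈ K :=
    hscale _ h1 (Set.smul_mem_smul_set ha)
  have h5 := hf _ hmem
  rw [map_smul, smul_eq_mul] at h5
  have h2 : (c+1)/(f a) ≤ max 1 ((c+1)/(f a)) := le_max_right _ _
  have h3 : ((c+1)/(f a)) * f a = c + 1 := div_mul_cancel₀ _ (ne_of_gt hpos)
  nlinarith [mul_le_mul_of_nonneg_right h2 (le_of_lt hpos)]

private lemma bipolar_mem (K : Set (EuclideanSpace ℝ (Fin n))) (hcl : IsClosed K)
    (hconv : Convex ℝ K) (h0 : (0 : EuclideanSpace ℝ (Fin n)) ∉ K)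
    (hscale : ∀ lam : ℝ, 1 ≤ lam → lam • K ⊆ K)
    (z : EuclideanSpace ℝ (Fin n)) (hz : ∀ v ∈ copolar K, ⟪v, z⟫ ≤ (-1:ℝ)) :
    z ∈ K := by
  by_contra hzK
  obtain ⟨f, c, hfK, hfz⟩ := geometric_hahn_banach_closed_point hconv hcl hzK
  obtain ⟨f0, c0, hf0K, hf0z⟩ := geometric_hahn_banach_closed_point hconv hcl h0
  have hc0neg : c0 < 0 := by simpa using hf0z
  have hfle : ∀ a ∈ K, f a ≤ 0 := le_zero_of_sep K hscale f c hfK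
  set c' : ℝ := min c 0 with hc'
  have hc'le : ∀ a ∈ K, f a ≤ c' := fun a ha => le_min (hfK a ha).le (hfle a ha)
  have hc'z : c' < f z := lt_of_le_of_lt (min_le_left _ _) hfz
  set A : ℝ := f z - c' with hA
  have hApos : 0 < A := sub_pos.mpr hc'z
  set B : ℝ := c0 - f0 z with hB
  set t : ℝ := A / (2 * (|B| + 1)) with ht
  have htpos : 0 < t := div_pos hApos (by positivity)
  set m : ℝ := c' + t * c0 with hm
  have hmneg : m < 0 :=
    add_neg_of_nonpos_of_neg (min_le_right _ _) (mul_neg_of_pos_of_neg htpos hc0neg)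
  have hgK : ∀ a ∈ K, f a + t * f0 a ≤ m := by
    intro a ha
    have h1 := hc'le a ha
    have h2 := (hf0K a ha).le
    nlinarith
  have hgz : m < f z + t * f0 z := by
    have hden : (0:ℝ) < 2 * (|B| + 1) := by positivity
    have hAeq : t * (2 * (|B| + 1)) = A := div_mul_cancel₀ _ hden.ne'
    have h1 : t * B ≤ t * |B| := mul_le_mul_of_nonneg_left (le_abs_self B) htpos.le
    nlinarith [abs_nonneg B]
  have hmpos : 0 < -m := neg_pos.mpr hmneg
  set w := (InnerProductSpace.toDual ℝ (EuclideanSpace ℝ (Fin n))).symm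
      ((-m)⁻¹ • (f + t • f0)) with hw
  have hwapp : ∀ y, ⟪w, y⟫ = (-m)⁻¹ * (f y + t * f0 y) := by
    intro y
    rw [hw, InnerProductSpace.toDual_symm_apply]
    simp [smul_eq_mul, mul_add]
  have hinv : (-m)⁻¹ * m = -1 := by
    field_simp
    rw [div_self hmneg.ne]
  have hwK : w ∈ copolar K := by
    intro a ha
    rw [hwapp]
    calc (-m)⁻¹ * (f a + t * f0 a) ≤ (-m)⁻¹ * m :=
          mul_le_mul_of_nonneg_left (hgK a ha) (inv_nonneg.mpr hmpos.le)
      _ = -1 := hinv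
  have hcontra := hz w hwK
  rw [hwapp] at hcontra
  have h2 : (-m)⁻¹ * m < (-m)⁻¹ * (f z + t * f0 z) :=
    mul_lt_mul_of_pos_left hgz (inv_pos.mpr hmpos)
  rw [hinv] at h2
  linarith

private lemma eq_of_hyperplane_eq (a b : EuclideanSpace ℝ (Fin n)) (ha : a ≠ 0)
    (h : {z : EuclideanSpace ℝ (Fin n) | ⟪a, z⟫ = (-1:ℝ)} =
      {z : EuclideanSpace ℝ (Fin n) | ⟪b, z⟫ = (-1:ℝ)}) : a = b := by
  have hnorm : (0:ℝ) < ‖a‖ := norm_pos_iff.mpr ha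
  have hna : (0:ℝ) < ⟪a, a⟫ := by
    rw [real_inner_self_eq_norm_sq]; positivity
  have hne : ⟪a, a⟫ ≠ (0:ℝ) := hna.ne'
  set z₀ : EuclideanSpace ℝ (Fin n) := (-(⟪a,a⟫)⁻¹) • a with hz₀
  have hz₀a : ⟪a, z₀⟫ = (-1:ℝ) := by
    rw [hz₀, real_inner_smul_right, neg_mul, inv_mul_cancel₀ hne]
  have hz₀b : ⟪b, z₀⟫ = (-1:ℝ) := by
    have hmem : z₀ ∈ {z : EuclideanSpace ℝ (Fin n) | ⟪a, z⟫ = (-1:ℝ)} := hz₀a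
    rw [h] at hmem
    exact hmem
  have hba : ⟪b, a⟫ = ⟪a, a⟫ := by
    rw [hz₀, real_inner_smul_right, neg_mul] at hz₀b
    have h1 : (⟪a,a⟫)⁻¹ * ⟪b, a⟫ = 1 := by linarith
    have h2 : ⟪a,a⟫ * ((⟪a,a⟫)⁻¹ * ⟪b, a⟫) = ⟪a,a⟫ * 1 := by rw [h1]
    rw [← mul_assoc, mul_inv_cancel₀ hne, one_mul, mul_one] at h2
    exact h2
  have key : ∀ w, ⟪a, w⟫ = ⟪b, w⟫ := by
    intro w
    set p : ℝ := ⟪a, w⟫ / ⟪a, a⟫ with hp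
    have hpa : p * ⟪a, a⟫ = ⟪a, w⟫ := div_mul_cancel₀ _ hne
    have horth : ⟪a, w - p • a⟫ = 0 := by
      rw [inner_sub_right, real_inner_smul_right, hpa, sub_self]
    have hmem : z₀ + (w - p • a) ∈ {z : EuclideanSpace ℝ (Fin n) | ⟪a, z⟫ = (-1:ℝ)} := by
      show ⟪a, z₀ + (w - p • a)⟫ = (-1:ℝ)
      rw [inner_add_right, horth, hz₀a]; ring
    rw [h] at hmem
    have hmem' : ⟪b, z₀ + (w - p • a)⟫ = (-1:ℝ) := hmem
    rw [inner_add_right, inner_sub_right, hz₀b, real_inner_smul_right, hba] at hmem'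
    linarith [hpa]
  exact ext_inner_right ℝ key

end Aux

/-- If a `C`-pseudo-cone `K` is smooth and strictly convex inside `int C`,
then the support function of `K*` (which is real-valued on `int C`, whence `toReal`)
is differentiable at every point of `int C`. -/
theorem supportFn_copolar_differentiableOn {n : ℕ}
    (C K : Set (EuclideanSpace ℝ (Fin n))) (hK : IsCPseudoCone C K)
    (hsm : SmoothInside K C) (hsc : StrictlyConvexInside K C) :
    ∀ x ∈ interior C,
      DifferentiableAt ℝ (fun y => (supportFn (copolar K) y).toReal) x := by
  obtain ⟨⟨hCcl, hCconv, hCcone, hCint, hCpt⟩, ⟨hKne, hKcl, hKconv, hK0, hKsc⟩, hrec⟩ := hK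
  intro x₀ hx₀
  by_cases hne : (copolar K).Nonempty
  swap
  · have hbot : (fun y => (supportFn (copolar K) y).toReal)
        = fun _ : EuclideanSpace ℝ (Fin n) => (0:ℝ) := by
      funext y
      rw [supportFn, Set.not_nonempty_iff_eq_empty.mp hne]
      simp
    rw [hbot]
    exact differentiableAt_const 0
  obtain ⟨w₀, hw₀⟩ := hne
  -- every element of the copolar has nonpositive inner product with C
  have hdual : ∀ u ∈ copolar K, ∀ c ∈ C, ⟪u, c⟫ ≤ (0:ℝ) := by
    intro u hu c hc
    rw [← hrec] at hc
    obtain ⟨k, hk⟩ := hKne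
    by_contra hpos
    push_neg at hpos
    have hk1 : ⟪u, k⟫ ≤ -1 := hu k hk
    have ht0 : (0:ℝ) ≤ (-⟪u,k⟫ + 1) / ⟪u,c⟫ := div_nonneg (by linarith) hpos.le
    have hmem := hc k hk _ ht0
    have h2 := hu _ hmem
    rw [inner_add_right, real_inner_smul_right] at h2
    have h3 : ((-⟪u,k⟫ + 1) / ⟪u,c⟫) * ⟪u,c⟫ = -⟪u,k⟫ + 1 := div_mul_cancel₀ _ hpos.ne'
    linarith
  -- the copolar does not contain 0
  have h0K : (0 : EuclideanSpace ℝ (Fin n)) ∉ copolar K := by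
    intro h
    obtain ⟨k, hk⟩ := hKne
    have h2 := h k hk
    rw [inner_zero_left] at h2
    linarith
  -- choose ε
  obtain ⟨ε0, hε0, hball0⟩ := Metric.isOpen_iff.mp isOpen_interior x₀ hx₀
  set ε : ℝ := ε0/3 with hεdef
  have hε : 0 < ε := by positivity
  have hballint : ∀ z : EuclideanSpace ℝ (Fin n), dist z x₀ < 3*ε → z ∈ interior C := by
    intro z hz
    exact hball0 (by rw [Metric.mem_ball]; linarith)
  have hball3 : ∀ z : EuclideanSpace ℝ (Fin n), dist z x₀ < 3*ε → z ∈ C :=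
    fun z hz => interior_subset (hballint z hz)
  -- key norm bound for elements of the copolar
  have hbound : ∀ y : EuclideanSpace ℝ (Fin n), dist y x₀ < ε →
      ∀ u ∈ copolar K, ε * ‖u‖ ≤ -⟪y, u⟫ := by
    intro y hy u hu
    rcases eq_or_ne u 0 with rfl | hu0
    · simp
    have hnu : 0 < ‖u‖ := norm_pos_iff.mpr hu0
    have hvnorm : ‖ε • (‖u‖⁻¹ • u)‖ = ε := by
      rw [norm_smul, norm_smul, norm_inv, norm_norm, Real.norm_eq_abs, abs_of_pos hε,
        inv_mul_cancel₀ hnu.ne', mul_one]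
    have hvC : y + ε • (‖u‖⁻¹ • u) ∈ C := by
      apply hball3
      calc dist (y + ε • (‖u‖⁻¹ • u)) x₀ ≤ dist (y + ε • (‖u‖⁻¹ • u)) y + dist y x₀ :=
            dist_triangle _ _ _
        _ < ε + ε := by
            rw [dist_eq_norm, add_sub_cancel_left, hvnorm]; linarith
        _ < 3*ε := by linarith
    have h1 := hdual u hu _ hvC
    rw [inner_add_right, real_inner_smul_right, real_inner_smul_right,
      real_inner_self_eq_norm_sq] at h1
    have h2 : ‖u‖⁻¹ * ‖u‖^2 = ‖u‖ := by
      field_simp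
    rw [real_inner_comm]
    nlinarith
  -- existence of maximizers
  have hmaxex : ∀ y : EuclideanSpace ℝ (Fin n), dist y x₀ < ε →
      ∃ u, u ∈ copolar K ∧ ∀ v ∈ copolar K, ⟪y, v⟫ ≤ ⟪y, u⟫ := by
    intro y hy
    set S : Set (EuclideanSpace ℝ (Fin n)) :=
      copolar K ∩ {u | ⟪y, w₀⟫ ≤ ⟪y, u⟫} with hS
    have hSne : S.Nonempty := ⟨w₀, hw₀, show ⟪y, w₀⟫ ≤ ⟪y, w₀⟫ from le_rfl⟩
    have hScl : IsClosed S :=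
      (isClosed_copolar' K).inter
        (isClosed_le continuous_const (Continuous.inner continuous_const continuous_id))
    have hSsub : S ⊆ Metric.closedBall 0 ((-⟪y, w₀⟫)/ε) := by
      rintro u ⟨hu1, hu2⟩
      rw [Metric.mem_closedBall, dist_zero_right, le_div_iff₀ hε]
      have := hbound y hy u hu1
      have hu2' : ⟪y, w₀⟫ ≤ ⟪y, u⟫ := hu2
      nlinarith
    have hScomp : IsCompact S :=
      IsCompact.of_isClosed_subset (isCompact_closedBall _ _) hScl hSsub
    have hcont : ContinuousOn (fun u : EuclideanSpace ℝ (Fin n) => (⟪y, u⟫ : ℝ)) S :=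
      (Continuous.inner continuous_const continuous_id).continuousOn
    obtain ⟨u, huS, hmax⟩ := hScomp.exists_isMaxOn hSne hcont
    refine ⟨u, huS.1, fun v hv => ?_⟩
    rcases le_or_gt (⟪y, v⟫) (⟪y, w₀⟫) with h | h
    · exact le_trans h huS.2
    · exact hmax ⟨hv, h.le⟩
  have hex : ∀ y : EuclideanSpace ℝ (Fin n), ∃ u,
      dist y x₀ < ε → u ∈ copolar K ∧ ∀ v ∈ copolar K, ⟪y, v⟫ ≤ ⟪y, u⟫ := by
    intro y
    by_cases h : dist y x₀ < ε
    · obtain ⟨u, h1, h2⟩ := hmaxex y h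
      exact ⟨u, fun _ => ⟨h1, h2⟩⟩
    · exact ⟨w₀, fun hc => absurd hc h⟩
  choose U hU using hex
  have hx₀self : dist x₀ x₀ < ε := by simpa using hε
  -- value of the support function
  have hval : ∀ y : EuclideanSpace ℝ (Fin n), dist y x₀ < ε →
      (supportFn (copolar K) y).toReal = ⟪y, U y⟫ := by
    intro y hy
    obtain ⟨hUK, hUmax⟩ := hU y hy
    have heq : supportFn (copolar K) y = ((⟪y, U y⟫ : ℝ) : EReal) := by
      apply le_antisymm
      · apply sSup_le
        rintro a ⟨v, hv, rfl⟩
        exact EReal.coe_le_coe_iff.mpr (hUmax v hv)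
      · exact le_sSup ⟨U y, hUK, rfl⟩
    rw [heq, EReal.toReal_coe]
  -- uniqueness of maximizers
  have huniq : ∀ y : EuclideanSpace ℝ (Fin n), dist y x₀ < ε →
      ∀ u₁ u₂ : EuclideanSpace ℝ (Fin n),
      (u₁ ∈ copolar K ∧ ∀ v ∈ copolar K, ⟪y, v⟫ ≤ ⟪y, u₁⟫) →
      (u₂ ∈ copolar K ∧ ∀ v ∈ copolar K, ⟪y, v⟫ ≤ ⟪y, u₂⟫) → u₁ = u₂ := by
    intro y hy u₁ u₂ hu₁ hu₂
    have hu₁0 : u₁ ≠ 0 := fun h => h0K (h ▸ hu₁.1)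
    have hu₂0 : u₂ ≠ 0 := fun h => h0K (h ▸ hu₂.1)
    have hveq : ⟪y, u₁⟫ = ⟪y, u₂⟫ :=
      le_antisymm (hu₂.2 u₁ hu₁.1) (hu₁.2 u₂ hu₂.1)
    set s : ℝ := -⟪y, u₁⟫ with hs
    have hnu₁ : 0 < ‖u₁‖ := norm_pos_iff.mpr hu₁0
    have hspos : 0 < s := by
      have := hbound y hy u₁ hu₁.1
      nlinarith
    set x : EuclideanSpace ℝ (Fin n) := s⁻¹ • y with hx
    have hsy : s • x = y := by
      rw [hx, smul_smul, mul_inv_cancel₀ hspos.ne', one_smul]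
    have hxK : x ∈ K := by
      apply bipolar_mem K hKcl hKconv hK0 hKsc
      intro v hv
      rw [hx, real_inner_smul_right]
      have h1 : ⟪v, y⟫ ≤ ⟪y, u₁⟫ := by
        rw [real_inner_comm]; exact hu₁.2 v hv
      calc s⁻¹ * ⟪v, y⟫ ≤ s⁻¹ * ⟪y, u₁⟫ :=
            mul_le_mul_of_nonneg_left h1 (inv_nonneg.mpr hspos.le)
        _ = s⁻¹ * (-s) := by rw [hs]; ring_nf
        _ = -1 := by field_simp
    have hxu₁ : ⟪u₁, x⟫ = (-1:ℝ) := by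
      rw [hx, real_inner_smul_right, real_inner_comm]
      have : ⟪y, u₁⟫ = -s := by rw [hs]; ring
      rw [this]
      field_simp
    have hxu₂ : ⟪u₂, x⟫ = (-1:ℝ) := by
      rw [hx, real_inner_smul_right, real_inner_comm]
      have : ⟪y, u₂⟫ = -s := by rw [hs, hveq]; ring
      rw [this]
      field_simp
    have hxfr : x ∈ frontier K := by
      rw [frontier]
      refine ⟨subset_closure hxK, ?_⟩
      intro hint
      rw [mem_interior_iff_mem_nhds, Metric.mem_nhds_iff] at hint
      obtain ⟨r, hr, hballK⟩ := hint
      have hzK : x + (r/(2*‖u₁‖)) • u₁ ∈ K := by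
        apply hballK
        rw [Metric.mem_ball, dist_eq_norm, add_sub_cancel_left, norm_smul,
          Real.norm_eq_abs, abs_of_pos (by positivity : (0:ℝ) < r/(2*‖u₁‖))]
        have heq : r/(2*‖u₁‖) * ‖u₁‖ = r/2 := by
          field_simp
        rw [heq]
        linarith
      have h2 := hu₁.1 _ hzK
      have h4 : ⟪u₁, (r/(2*‖u₁‖)) • u₁⟫ = (r/(2*‖u₁‖)) * ‖u₁‖^2 := by
        rw [real_inner_smul_right, real_inner_self_eq_norm_sq]
      rw [inner_add_right, h4, hxu₁] at h2
      have h3 : 0 < (r/(2*‖u₁‖)) * ‖u₁‖^2 := by positivity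
      linarith
    have hxint : x ∈ interior C := by
      have hyC : y ∈ interior C := hballint y (by linarith)
      obtain ⟨r, hr, hbr⟩ := Metric.isOpen_iff.mp isOpen_interior y hyC
      have hsub : Metric.ball x (s⁻¹ * r) ⊆ C := by
        intro z hz
        have hz2 : s • z ∈ Metric.ball y r := by
          rw [Metric.mem_ball, dist_eq_norm, ← hsy, ← smul_sub, norm_smul,
            Real.norm_eq_abs, abs_of_pos hspos]
          rw [Metric.mem_ball, dist_eq_norm] at hz
          calc s * ‖z - x‖ < s * (s⁻¹ * r) := by
                exact mul_lt_mul_of_pos_left hz hspos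
            _ = r := by field_simp
        have hz3 : s • z ∈ C := interior_subset (hbr hz2)
        have hz4 : z = s⁻¹ • (s • z) := by
          rw [smul_smul, inv_mul_cancel₀ hspos.ne', one_smul]
        rw [hz4]
        exact hCcone s⁻¹ (inv_nonneg.mpr hspos.le) (Set.smul_mem_smul_set hz3)
      exact mem_interior.mpr ⟨Metric.ball x (s⁻¹ * r), hsub, Metric.isOpen_ball,
        Metric.mem_ball_self (by positivity)⟩
    obtain ⟨H, _, hHuniq⟩ := hsm x ⟨hxfr, hxint⟩
    have h1 := hHuniq {z : EuclideanSpace ℝ (Fin n) | ⟪u₁, z⟫ = (-1:ℝ)}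
      ⟨⟨u₁, -1, hu₁0, rfl, fun k hk => hu₁.1 k hk, ⟨x, hxK, hxu₁⟩⟩, hxu₁⟩
    have h2 := hHuniq {z : EuclideanSpace ℝ (Fin n) | ⟪u₂, z⟫ = (-1:ℝ)}
      ⟨⟨u₂, -1, hu₂0, rfl, fun k hk => hu₂.1 k hk, ⟨x, hxK, hxu₂⟩⟩, hxu₂⟩
    exact eq_of_hyperplane_eq u₁ u₂ hu₁0 (h1.trans h2.symm)
  -- convergence of maximizers
  have hconv : ∀ δ : ℝ, 0 < δ → ∃ r : ℝ, 0 < r ∧ r ≤ ε ∧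
      ∀ y : EuclideanSpace ℝ (Fin n), dist y x₀ < r → ‖U y - U x₀‖ ≤ δ := by
    intro δ hδ
    by_contra hcon
    push_neg at hcon
    have hseq : ∀ k : ℕ, ∃ y : EuclideanSpace ℝ (Fin n),
        dist y x₀ < min ε (ε/(k+1)) ∧ δ < ‖U y - U x₀‖ := by
      intro k
      have hpos : 0 < min ε (ε/(k+1)) := lt_min hε (by positivity)
      obtain ⟨y, hy1, hy2⟩ := hcon _ hpos (min_le_left _ _)
      exact ⟨y, hy1, hy2⟩
    choose ys hys1 hys2 using hseq
    have hyslt : ∀ k, dist (ys k) x₀ < ε := fun k =>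
      lt_of_lt_of_le (hys1 k) (min_le_left _ _)
    have htend0 : Filter.Tendsto (fun k : ℕ => ε/((k:ℝ)+1)) Filter.atTop (nhds 0) := by
      have h1 := (tendsto_const_div_atTop_nhds_zero_nat ε).comp
        (Filter.tendsto_add_atTop_nat 1)
      have heq : (fun k : ℕ => ε/((k:ℝ)+1))
          = (fun n : ℕ => ε / (n:ℝ)) ∘ (fun k : ℕ => k + 1) := by
        funext k
        simp [Function.comp]
      rw [heq]
      exact h1
    have hytend : Filter.Tendsto ys Filter.atTop (nhds x₀) := by
      rw [tendsto_iff_dist_tendsto_zero]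
      apply squeeze_zero (fun k => dist_nonneg)
        (fun k => (lt_of_lt_of_le (hys1 k) (min_le_right _ _)).le) htend0
    set R : ℝ := (‖x₀‖ + ε) * ‖U x₀‖ / ε with hR
    have hbdd : ∀ k, U (ys k) ∈ Metric.closedBall (0 : EuclideanSpace ℝ (Fin n)) R := by
      intro k
      obtain ⟨hUK, hUm⟩ := hU (ys k) (hyslt k)
      obtain ⟨hU0K, hU0m⟩ := hU x₀ hx₀self
      have h1 := hbound (ys k) (hyslt k) (U (ys k)) hUK
      have h2 : ⟪ys k, U x₀⟫ ≤ ⟪ys k, U (ys k)⟫ := hUm _ hU0K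
      have h3 : -⟪ys k, U x₀⟫ ≤ ‖ys k‖ * ‖U x₀‖ := by
        have ha := abs_real_inner_le_norm (ys k) (U x₀)
        have hb := neg_abs_le (⟪ys k, U x₀⟫)
        linarith
      have h4 : ‖ys k‖ ≤ ‖x₀‖ + ε := by
        have := norm_sub_norm_le (ys k) x₀
        rw [← dist_eq_norm] at this
        linarith [hyslt k]
      rw [Metric.mem_closedBall, dist_zero_right, hR, le_div_iff₀ hε]
      nlinarith [norm_nonneg (U x₀)]
    obtain ⟨ustar, _, φ, hφ, hφtend⟩ :=
      (isCompact_closedBall (0 : EuclideanSpace ℝ (Fin n)) R).tendsto_subseq hbdd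
    have hyφ : Filter.Tendsto (fun k => ys (φ k)) Filter.atTop (nhds x₀) :=
      hytend.comp hφ.tendsto_atTop
    have hustarK : ustar ∈ copolar K :=
      (isClosed_copolar' K).mem_of_tendsto hφtend
        (Filter.Eventually.of_forall fun k => (hU (ys (φ k)) (hyslt (φ k))).1)
    have hinner_t : Filter.Tendsto (fun k => ⟪ys (φ k), U (ys (φ k))⟫)
        Filter.atTop (nhds (⟪x₀, ustar⟫)) :=
      Filter.Tendsto.inner hyφ hφtend
    have hinner_t0 : Filter.Tendsto (fun k => ⟪ys (φ k), U x₀⟫)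
        Filter.atTop (nhds (⟪x₀, U x₀⟫)) :=
      Filter.Tendsto.inner hyφ tendsto_const_nhds
    have hge : ⟪x₀, U x₀⟫ ≤ ⟪x₀, ustar⟫ := by
      apply le_of_tendsto_of_tendsto' hinner_t0 hinner_t
      intro k
      exact (hU (ys (φ k)) (hyslt (φ k))).2 _ (hU x₀ hx₀self).1
    have hle : ⟪x₀, ustar⟫ ≤ ⟪x₀, U x₀⟫ := (hU x₀ hx₀self).2 ustar hustarK
    have heqmax : ⟪x₀, ustar⟫ = ⟪x₀, U x₀⟫ := le_antisymm hle hge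
    have hueq : ustar = U x₀ := by
      apply huniq x₀ hx₀self
      · exact ⟨hustarK, fun v hv => heqmax ▸ (hU x₀ hx₀self).2 v hv⟩
      · exact ⟨(hU x₀ hx₀self).1, (hU x₀ hx₀self).2⟩
    have hnormt : Filter.Tendsto (fun k => ‖U (ys (φ k)) - U x₀‖)
        Filter.atTop (nhds ‖ustar - U x₀‖) :=
      (hφtend.sub tendsto_const_nhds).norm
    have hgeδ : δ ≤ ‖ustar - U x₀‖ :=
      ge_of_tendsto hnormt (Filter.Eventually.of_forall fun k => (hys2 (φ k)).le)
    rw [hueq, sub_self, norm_zero] at hgeδ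
    linarith
  -- conclusion: differentiability
  have hfd : HasFDerivAt (fun y => (supportFn (copolar K) y).toReal)
      (innerSL ℝ (U x₀)) x₀ := by
    rw [hasFDerivAt_iff_isLittleO, Asymptotics.isLittleO_iff]
    intro c hc
    obtain ⟨r, hr, hrε, hrprop⟩ := hconv c hc
    refine Metric.eventually_nhds_iff.mpr ⟨r, hr, fun y hy => ?_⟩
    have hyε : dist y x₀ < ε := lt_of_lt_of_le hy hrε
    obtain ⟨hyK, hym⟩ := hU y hyε
    obtain ⟨h0K', h0m⟩ := hU x₀ hx₀self
    have e1 : ⟪U x₀, y⟫ = ⟪y, U x₀⟫ := real_inner_comm _ _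
    have e2 : ⟪U x₀, x₀⟫ = ⟪x₀, U x₀⟫ := real_inner_comm _ _
    have hlow : 0 ≤ ⟪y, U y⟫ - ⟪x₀, U x₀⟫ - ⟪U x₀, y - x₀⟫ := by
      have h1 : ⟪y, U x₀⟫ ≤ ⟪y, U y⟫ := hym _ h0K'
      rw [inner_sub_right]
      linarith
    have hup : ⟪y, U y⟫ - ⟪x₀, U x₀⟫ - ⟪U x₀, y - x₀⟫ ≤ c * ‖y - x₀‖ := by
      have h1 : ⟪x₀, U y⟫ ≤ ⟪x₀, U x₀⟫ := h0m (U y) hyK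
      have h2 : ⟪y - x₀, U y - U x₀⟫ ≤ ‖y - x₀‖ * ‖U y - U x₀‖ := real_inner_le_norm _ _
      have h3 : ‖U y - U x₀‖ ≤ c := hrprop y hy
      have hexp : ⟪y - x₀, U y - U x₀⟫
          = ⟪y, U y⟫ - ⟪x₀, U y⟫ - ⟪y, U x₀⟫ + ⟪x₀, U x₀⟫ := by
        rw [inner_sub_left, inner_sub_right, inner_sub_right]
        ring
      rw [inner_sub_right]
      nlinarith [mul_le_mul_of_nonneg_left h3 (norm_nonneg (y - x₀))]
    have hgoal : ‖(supportFn (copolar K) y).toReal - (supportFn (copolar K) x₀).toReal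
        - (innerSL ℝ (U x₀)) (y - x₀)‖ ≤ c * ‖y - x₀‖ := by
      rw [hval y hyε, hval x₀ hx₀self, innerSL_apply_apply, Real.norm_eq_abs, abs_le]
      constructor
      · have : 0 ≤ c * ‖y - x₀‖ := mul_nonneg hc.le (norm_nonneg _)
        linarith
      · linarith
    simpa using hgoal
  exact hfd.differentiableAt
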